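/- Let s, p, l and the families A_i, B_i, C_i, D_i be the real sequences defined in the context. Then for every integer n ≥ 1, D_0(n) = (10·3^n/(21·(5^n − 3^n)) + (18·5^n + 10·3^n)/(21·5^n·(5^n − 3^n)^2)) · l(n); that is, the probability L_{n,0}(0) that vertex 0 has degree 0 in a uniformly random three-tree spanning forest of H_n equals 10·3^n/(21·(5^n − 3^n)) + (18·5^n + 10·3^n)/(21·5^n·(5^n − 3^n)^2). -/

import Mathlib

noncomputable def hXf (t w : ℝ) : ℝ := (w - t) / (2 * t)
noncomputable def hUf (t w : ℝ) : ℝ := 5 * (t * w - 1) / (14 * t * w)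
noncomputable def hFf (t w : ℝ) : ℝ :=
  10 * t / (21 * (w - t)) + (18 * w + 10 * t) / (21 * w * (w - t) ^ 2)

lemma hanoi_id1 (t w : ℝ) (ht : 0 < t) (htw : t < w) :
    1 + 7 * hXf t w + 10 * hXf t w ^ 2 = hXf (3 * t) (5 * w) * (3 + 6 * hXf t w) := by
  have hw : 0 < w := ht.trans htw
  unfold hXf
  have h1 : (2 * t) ≠ 0 := by positivity
  have h2 : (2 * (3 * t)) ≠ 0 := by positivity
  field_simp
  ring

lemma hanoi_id2 (t w : ℝ) (ht : 0 < t) (htw : t < w) :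
    1 + 12 * hXf t w + 45 * hXf t w ^ 2 + 50 * hXf t w ^ 3 =
      3 * hXf (3 * t) (5 * w) ^ 2 * (3 + 6 * hXf t w) := by
  unfold hXf
  have h1 : (2 * t) ≠ 0 := by positivity
  have h2 : (2 * (3 * t)) ≠ 0 := by positivity
  field_simp
  ring

lemma hanoi_id3 (t w : ℝ) (ht : 0 < t) (htw : t < w) :
    3 * hUf t w + hFf t w * (3 * hXf t w ^ 2) + 4 * hUf t w * hXf t w =
      hUf (3 * t) (5 * w) * (3 + 6 * hXf t w) := by
  have hw : 0 < w := ht.trans htw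
  have hd : 0 < w - t := by linarith
  have hd2 : 0 < 5 * w - 3 * t := by linarith
  unfold hXf hUf hFf
  have h1 : (2 * t) ≠ 0 := by positivity
  have h2 : (14 * t * w) ≠ 0 := by positivity
  have h3 : (21 * (w - t)) ≠ 0 := by positivity
  have h4 : (21 * w * (w - t) ^ 2) ≠ 0 := by positivity
  have h5 : (14 * (3 * t) * (5 * w)) ≠ 0 := by positivity
  field_simp
  ring

lemma hanoi_id4 (t w : ℝ) (ht : 0 < t) (htw : t < w) :
    2 * hUf t w + hFf t w * (3 * hXf t w ^ 2) + 12 * hUf t w * hXf t w +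
        4 * (hFf t w * (3 * hXf t w ^ 2)) * hXf t w + 12 * hUf t w * hXf t w ^ 2 =
      hFf (3 * t) (5 * w) * (3 * hXf (3 * t) (5 * w) ^ 2) * (3 + 6 * hXf t w) := by
  have hw : 0 < w := ht.trans htw
  have hd : 0 < w - t := by linarith
  have hd2 : 0 < 5 * w - 3 * t := by linarith
  unfold hXf hUf hFf
  have h1 : (2 * t) ≠ 0 := by positivity
  have h2 : (14 * t * w) ≠ 0 := by positivity
  have h3 : (21 * (w - t)) ≠ 0 := by positivity
  have h4 : (21 * w * (w - t) ^ 2) ≠ 0 := by positivity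
  have h5 : (21 * (5 * w - 3 * t)) ≠ 0 := by positivity
  have h6 : (21 * (5 * w) * (5 * w - 3 * t) ^ 2) ≠ 0 := by positivity
  have h7 : (2 * (3 * t)) ≠ 0 := by positivity
  have h8 : 5 * w - t * 3 ≠ 0 := by linarith
  field_simp
  ring

theorem hanoi_stmt_13 (s p l : ℕ → ℝ)
    (hs1 : s 1 = 3) (hp1 : p 1 = 1) (hl1 : l 1 = 1)
    (hs : ∀ n, 1 ≤ n → s (n + 1) = 3 * s n ^ 3 + 6 * s n ^ 2 * p n)
    (hp : ∀ n, 1 ≤ n → p (n + 1) = s n ^ 3 + 7 * s n ^ 2 * p n + 7 * s n * p n ^ 2 + s n ^ 2 * l n)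
    (hl : ∀ n, 1 ≤ n → l (n + 1) = s n ^ 3 + 12 * s n ^ 2 * p n + 3 * s n ^ 2 * l n + 36 * s n * p n ^ 2 + 12 * s n * p n * l n + 14 * p n ^ 3)
    (A B C D : ℕ → ℕ → ℝ)
    (hA11 : A 1 1 = 2) (hA21 : A 2 1 = 1)
    (hA01 : ∀ i, i ≠ 1 → i ≠ 2 → A i 1 = 0)
    (hB11 : B 1 1 = 1) (hB01 : ∀ i, i ≠ 1 → B i 1 = 0)
    (hC01 : C 0 1 = 1) (hC01' : ∀ i, i ≠ 0 → C i 1 = 0)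
    (hD01 : D 0 1 = 1) (hD01' : ∀ i, i ≠ 0 → D i 1 = 0)
    (hA : ∀ i n, 1 ≤ n → A i (n + 1) = 3 * A i n * s n ^ 2 + 2 * B i n * s n ^ 2 + 4 * A i n * s n * p n)
    (hB : ∀ i n, 1 ≤ n → B i (n + 1) = A i n * s n ^ 2 + B i n * s n ^ 2 + 6 * A i n * s n * p n + 4 * B i n * s n * p n + 3 * A i n * p n ^ 2 + A i n * p n * l n)
    (hC : ∀ i n, 1 ≤ n → C i (n + 1) = A i n * s n ^ 2 + 2 * B i n * s n ^ 2 + 3 * C i n * s n ^ 2 + D i n * s n ^ 2 + 2 * A i n * s n * p n + 2 * B i n * s n * p n + 4 * C i n * s n * p n + A i n * p n ^ 2)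
    (hD : ∀ i n, 1 ≤ n → D i (n + 1) = A i n * s n ^ 2 + 2 * B i n * s n ^ 2 + 2 * C i n * s n ^ 2 + D i n * s n ^ 2 + 8 * A i n * s n * p n + 12 * B i n * s n * p n + 12 * C i n * s n * p n + 4 * D i n * s n * p n + 12 * A i n * p n ^ 2 + 8 * B i n * p n ^ 2 + 6 * C i n * p n ^ 2 + 2 * A i n * s n * l n + 2 * B i n * s n * l n + 2 * C i n * s n * l n + 4 * A i n * p n * l n) :
    ∀ n, 1 ≤ n → D 0 n = (10 * (3 : ℝ) ^ n / (21 * ((5 : ℝ) ^ n - (3 : ℝ) ^ n)) + (18 * (5 : ℝ) ^ n + 10 * (3 : ℝ) ^ n) / (21 * (5 : ℝ) ^ n * ((5 : ℝ) ^ n - (3 : ℝ) ^ n) ^ 2)) * l n := by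
  have key : ∀ n, 1 ≤ n →
      0 < s n ∧ p n = hXf ((3:ℝ)^n) ((5:ℝ)^n) * s n ∧
      l n = 3 * hXf ((3:ℝ)^n) ((5:ℝ)^n) ^ 2 * s n ∧
      A 0 n = 0 ∧ B 0 n = 0 ∧
      C 0 n = hUf ((3:ℝ)^n) ((5:ℝ)^n) * s n ∧
      D 0 n = hFf ((3:ℝ)^n) ((5:ℝ)^n) * (3 * hXf ((3:ℝ)^n) ((5:ℝ)^n) ^ 2) * s n := by
    intro n hn
    induction n, hn using Nat.le_induction with
    | base =>
      refine ⟨by rw [hs1]; norm_num, ?_, ?_, hA01 0 (by norm_num) (by norm_num),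
        hB01 0 (by norm_num), ?_, ?_⟩ <;>
        simp only [hs1, hp1, hl1, hC01, hD01, hXf, hUf, hFf, pow_one] <;> norm_num
    | succ n hn ih =>
      obtain ⟨hspos, hpe, hle, hA0, hB0, hCe, hDe⟩ := ih
      set t := (3:ℝ)^n with htdef
      set w := (5:ℝ)^n with hwdef
      have ht : 0 < t := by positivity
      have htw : t < w := by
        have := pow_lt_pow_left₀ (by norm_num : (3:ℝ) < 5) (by norm_num : (0:ℝ) ≤ 3)
          (Nat.one_le_iff_ne_zero.mp hn)
        simpa [htdef, hwdef] using this
      have hXnn : 0 ≤ hXf t w := by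
        unfold hXf
        have : 0 < w - t := by linarith
        positivity
      have h3 : (3:ℝ)^(n+1) = 3 * t := by rw [htdef, pow_succ]; ring
      have h5 : (5:ℝ)^(n+1) = 5 * w := by rw [hwdef, pow_succ]; ring
      have hsn : s (n+1) = (3 + 6 * hXf t w) * s n ^ 3 := by
        rw [hs n hn, hpe]; ring
      have hsnpos : 0 < s (n+1) := by
        rw [hsn]
        have : 0 < 3 + 6 * hXf t w := by linarith
        positivity
      refine ⟨hsnpos, ?_, ?_, ?_, ?_, ?_, ?_⟩
      · rw [hp n hn, hpe, hle, hsn, h3, h5]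
        linear_combination s n ^ 3 * hanoi_id1 t w ht htw
      · rw [hl n hn, hpe, hle, hsn, h3, h5]
        linear_combination s n ^ 3 * hanoi_id2 t w ht htw
      · rw [hA 0 n hn, hA0, hB0]; ring
      · rw [hB 0 n hn, hA0, hB0]; ring
      · rw [hC 0 n hn, hA0, hB0, hCe, hDe, hpe, hsn, h3, h5]
        linear_combination s n ^ 3 * hanoi_id3 t w ht htw
      · rw [hD 0 n hn, hA0, hB0, hCe, hDe, hpe, hle, hsn, h3, h5]
        linear_combination s n ^ 3 * hanoi_id4 t w ht htw
  intro n hn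
  obtain ⟨hspos, hpe, hle, hA0, hB0, hCe, hDe⟩ := key n hn
  rw [hDe, hle, hFf]
  ring
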